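/- Let R be a 2-torsion free σ-prime ring and U a nonzero σ-Lie ideal of R. If d is a derivation of R commuting with σ (d∘σ = σ∘d) such that d(U) = 0, then d = 0 or U ⊆ Z(R). -/
import Mathlib


theorem stmt5 (R : Type*) [Ring R]
  (σ : R → R)
  (hσadd : ∀ x y : R, σ (x + y) = σ x + σ y)
  (hσmul : ∀ x y : R, σ (x * y) = σ y * σ x)
  (hσinv : ∀ x : R, σ (σ x) = x)
  (htor : ∀ x : R, x + x = 0 → x = 0)
  (hsp : ∀ a b : R, (∀ r : R, a * r * b = 0) → (∀ r : R, a * r * σ b = 0) → a = 0 ∨ b = 0)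
  (U : AddSubgroup R)
  (hLie : ∀ u ∈ U, ∀ r : R, u * r - r * u ∈ U)
  (hσU : ∀ u ∈ U, σ u ∈ U)
  (hUnz : ∃ u ∈ U, u ≠ (0 : R))
  (d : R → R)
  (hdadd : ∀ x y : R, d (x + y) = d x + d y)
  (hdmul : ∀ x y : R, d (x * y) = d x * y + x * d y)
  (hdσ : ∀ x : R, d (σ x) = σ (d x))
  (hdU : ∀ u ∈ U, d u = 0) :
    (∀ x : R, d x = 0) ∨ (∀ u ∈ U, ∀ r : R, u * r = r * u) := by
  -- basic consequences of additivity
  have hd0 : d 0 = 0 := by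
    have h := hdadd 0 0
    rw [add_zero] at h
    exact (left_eq_add.mp h)
  have hdneg : ∀ x : R, d (-x) = - d x := by
    intro x
    have h := hdadd x (-x)
    rw [add_neg_cancel, hd0] at h
    exact eq_neg_of_add_eq_zero_right h.symm
  have hdsub : ∀ x y : R, d (x - y) = d x - d y := by
    intro x y
    rw [sub_eq_add_neg, hdadd, hdneg, ← sub_eq_add_neg]
  have hσ0 : σ 0 = 0 := by
    have h := hσadd 0 0
    rw [add_zero] at h
    exact (left_eq_add.mp h)
  have hσneg : ∀ x : R, σ (-x) = - σ x := by
    intro x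
    have h := hσadd x (-x)
    rw [add_neg_cancel, hσ0] at h
    exact eq_neg_of_add_eq_zero_right h.symm
  have hσsub : ∀ x y : R, σ (x - y) = σ x - σ y := by
    intro x y
    rw [sub_eq_add_neg, hσadd, hσneg, ← sub_eq_add_neg]
  by_cases hd : ∀ x : R, d x = 0
  · exact Or.inl hd
  right
  push_neg at hd
  obtain ⟨z₀, hz₀⟩ := hd
  -- Step 1: u * d x = d x * u for u ∈ U
  have step1 : ∀ u ∈ U, ∀ x : R, u * d x - d x * u = 0 := by
    intro u hu x
    have h := hdU _ (hLie u hu x)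
    rw [hdsub, hdmul, hdmul, hdU u hu] at h
    calc u * d x - d x * u
        = (0 * x + u * d x) - (d x * u + x * 0) := by noncomm_ring
      _ = 0 := h
  -- Step 2: d x * [u,y] + [u,x] * d y = 0
  have step2 : ∀ u ∈ U, ∀ x y : R,
      d x * (u * y - y * u) + (u * x - x * u) * d y = 0 := by
    intro u hu x y
    have h1 := step1 u hu (x * y)
    rw [hdmul] at h1
    have h2 := step1 u hu x
    have h3 := step1 u hu y
    calc d x * (u * y - y * u) + (u * x - x * u) * d y
        = (u * (d x * y + x * d y) - (d x * y + x * d y) * u)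
          - (u * d x - d x * u) * y - x * (u * d y - d y * u) := by noncomm_ring
      _ = 0 := by rw [h1, h2, h3]; noncomm_ring
  -- Step 3: d x * y * [u,z] + [u,x] * y * d z = 0
  have step3 : ∀ u ∈ U, ∀ x y z : R,
      d x * y * (u * z - z * u) + (u * x - x * u) * (y * d z) = 0 := by
    intro u hu x y z
    have h1 := step2 u hu x (y * z)
    rw [hdmul] at h1
    have h2 := step2 u hu x y
    calc d x * y * (u * z - z * u) + (u * x - x * u) * (y * d z)
        = (d x * (u * (y * z) - (y * z) * u) + (u * x - x * u) * (d y * z + y * d z))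
          - (d x * (u * y - y * u) + (u * x - x * u) * d y) * z := by noncomm_ring
      _ = 0 := by rw [h1, h2]; noncomm_ring
  -- Step 4: for u, x ∈ U : [u,x] * y * d z = 0
  have step4 : ∀ u ∈ U, ∀ x ∈ U, ∀ y z : R,
      (u * x - x * u) * y * d z = 0 := by
    intro u hu x hx y z
    have h := step3 u hu x y z
    rw [hdU x hx] at h
    calc (u * x - x * u) * y * d z
        = 0 * y * (u * z - z * u) + (u * x - x * u) * (y * d z) := by noncomm_ring
      _ = 0 := h
  -- Step 5: U is commutative: [U,U] = 0
  have comm_UU : ∀ u ∈ U, ∀ x ∈ U, u * x - x * u = 0 := by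
    intro u hu x hx
    have h1 : ∀ r : R, (u * x - x * u) * r * d z₀ = 0 := fun r => step4 u hu x hx r z₀
    have h2 : ∀ r : R, (u * x - x * u) * r * σ (d z₀) = 0 := by
      intro r
      rw [← hdσ]
      exact step4 u hu x hx r (σ z₀)
    rcases hsp _ _ h1 h2 with h | h
    · exact h
    · exact absurd h hz₀
  -- Step 6-8: for u ∈ U, the inner derivation δ(r) = [u,r] satisfies δ(r) s δ(t) = 0
  have hdd : ∀ u ∈ U, ∀ r : R, u * (u * r - r * u) - (u * r - r * u) * u = 0 :=
    fun u hu r => comm_UU u hu _ (hLie u hu r)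
  have step7 : ∀ u ∈ U, ∀ r s : R, (u * r - r * u) * (u * s - s * u) = 0 := by
    intro u hu r s
    apply htor
    have h1 := hdd u hu (r * s)
    have h2 := hdd u hu r
    have h3 := hdd u hu s
    calc (u * r - r * u) * (u * s - s * u) + (u * r - r * u) * (u * s - s * u)
        = (u * (u * (r * s) - (r * s) * u) - (u * (r * s) - (r * s) * u) * u)
          - (u * (u * r - r * u) - (u * r - r * u) * u) * s
          - r * (u * (u * s - s * u) - (u * s - s * u) * u) := by noncomm_ring
      _ = 0 := by rw [h1, h2, h3]; noncomm_ring
  have step8 : ∀ u ∈ U, ∀ r y z : R, (u * r - r * u) * y * (u * z - z * u) = 0 := by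
    intro u hu r y z
    have h1 := step7 u hu r (y * z)
    have h2 := step7 u hu r y
    calc (u * r - r * u) * y * (u * z - z * u)
        = (u * r - r * u) * (u * (y * z) - (y * z) * u)
          - ((u * r - r * u) * (u * y - y * u)) * z := by noncomm_ring
      _ = 0 := by rw [h1, h2]; noncomm_ring
  -- Step 9: σ-symmetric or σ-skew elements of U are central
  have central_sym : ∀ u ∈ U, (σ u = u ∨ σ u = -u) → ∀ r : R, u * r - r * u = 0 := by
    intro u hu hsym r
    have h1 : ∀ s : R, (u * r - r * u) * s * (u * r - r * u) = 0 :=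
      fun s => step8 u hu r s r
    have h2 : ∀ s : R, (u * r - r * u) * s * σ (u * r - r * u) = 0 := by
      intro s
      have hσa : σ (u * r - r * u) = σ r * σ u - σ u * σ r := by
        rw [hσsub, hσmul, hσmul]
      rcases hsym with h | h
      · rw [hσa, h]
        have := step8 u hu r s (σ r)
        calc (u * r - r * u) * s * (σ r * u - u * σ r)
            = -((u * r - r * u) * s * (u * σ r - σ r * u)) := by noncomm_ring
          _ = 0 := by rw [this]; simp
      · rw [hσa, h]
        have := step8 u hu r s (σ r)
        calc (u * r - r * u) * s * (σ r * -u - -u * σ r)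
            = (u * r - r * u) * s * (u * σ r - σ r * u) := by noncomm_ring
          _ = 0 := this
    rcases hsp _ _ h1 h2 with h | h
    · exact h
    · exact h
  -- Step 10: conclude
  intro u hu r
  have ha : u + σ u ∈ U := U.add_mem hu (hσU u hu)
  have hb : u - σ u ∈ U := U.sub_mem hu (hσU u hu)
  have hca := central_sym _ ha (Or.inl (by rw [hσadd, hσinv, add_comm])) r
  have hcb := central_sym _ hb (Or.inr (by rw [hσsub, hσinv, neg_sub])) r
  have h2 : (u * r - r * u) + (u * r - r * u) = 0 := by
    calc (u * r - r * u) + (u * r - r * u)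
        = ((u + σ u) * r - r * (u + σ u)) + ((u - σ u) * r - r * (u - σ u)) := by
          noncomm_ring
      _ = 0 := by rw [hca, hcb]; simp
  have := htor _ h2
  exact sub_eq_zero.mp this
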